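/- Let γ ∈ M_k ⊗ M_m be a state and W ∈ M_k an orthogonal projection. If there exists an orthogonal projection V ∈ M_m with tr(γ(W ⊗ V^⊥)) = tr(γ(W^⊥ ⊗ V)) = 0, then Im(F_γ(G_γ(W))) ⊆ Im(W), and hence the map F_γ ∘ G_γ leaves the subalgebra W M_k W invariant. -/

import Mathlib

open Matrix ComplexOrder Kronecker

noncomputable def Gmap {k m : ℕ} (γ : Matrix (Fin k × Fin m) (Fin k × Fin m) ℂ)
    (X : Matrix (Fin k) (Fin k) ℂ) : Matrix (Fin m) (Fin m) ℂ :=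
  Matrix.of fun p q => ∑ i, ∑ j, γ (i, p) (j, q) * X j i

noncomputable def Fmap {k m : ℕ} (γ : Matrix (Fin k × Fin m) (Fin k × Fin m) ℂ)
    (Y : Matrix (Fin m) (Fin m) ℂ) : Matrix (Fin k) (Fin k) ℂ :=
  Matrix.of fun i j => ∑ p, ∑ q, γ (i, p) (j, q) * Y q p

private lemma sum4_eq {M : Type*} [AddCommMonoid M] {A B C D A' B' C' D' : Type*}
    [Fintype A] [Fintype B] [Fintype C] [Fintype D]
    [Fintype A'] [Fintype B'] [Fintype C'] [Fintype D']
    (f : A → B → C → D → M) (g : A' → B' → C' → D' → M)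
    (e : A × B × C × D ≃ A' × B' × C' × D')
    (h : ∀ a b c d, f a b c d
      = g (e (a,b,c,d)).1 (e (a,b,c,d)).2.1 (e (a,b,c,d)).2.2.1 (e (a,b,c,d)).2.2.2) :
    ∑ a, ∑ b, ∑ c, ∑ d, f a b c d = ∑ a, ∑ b, ∑ c, ∑ d, g a b c d := by
  have hf : ∑ a, ∑ b, ∑ c, ∑ d, f a b c d
      = ∑ x : A × B × C × D, f x.1 x.2.1 x.2.2.1 x.2.2.2 := by
    simp [Fintype.sum_prod_type]
  have hg : (∑ a, ∑ b, ∑ c, ∑ d, g a b c d)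
      = ∑ x : A' × B' × C' × D', g x.1 x.2.1 x.2.2.1 x.2.2.2 := by
    simp [Fintype.sum_prod_type]
  rw [hf, hg]
  exact Fintype.sum_equiv e _ _ (fun ⟨a,b,c,d⟩ => h a b c d)

section KronLemmas

variable {k m : ℕ}

lemma Gmap_left_kron (δ : Matrix (Fin k × Fin m) (Fin k × Fin m) ℂ)
    (P Z : Matrix (Fin k) (Fin k) ℂ) (Q : Matrix (Fin m) (Fin m) ℂ) :
    Gmap ((P ⊗ₖ Q) * δ) Z = Q * Gmap δ (Z * P) := by
  ext p q
  simp only [Gmap, of_apply, Matrix.mul_apply, Fintype.sum_prod_type, kroneckerMap_apply,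
    Finset.sum_mul, Finset.mul_sum]
  exact sum4_eq _ _ ⟨fun x => (x.2.2.2, x.2.2.1, x.2.1, x.1),
    fun y => (y.2.2.2, y.2.2.1, y.2.1, y.1), fun _ => rfl, fun _ => rfl⟩
    (fun a b c d => by dsimp; ring)

lemma Gmap_right_kron (δ : Matrix (Fin k × Fin m) (Fin k × Fin m) ℂ)
    (R Z : Matrix (Fin k) (Fin k) ℂ) (S : Matrix (Fin m) (Fin m) ℂ) :
    Gmap (δ * (R ⊗ₖ S)) Z = Gmap δ (R * Z) * S := by
  ext p q
  simp only [Gmap, of_apply, Matrix.mul_apply, Fintype.sum_prod_type, kroneckerMap_apply,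
    Finset.sum_mul, Finset.mul_sum]
  exact sum4_eq _ _ ⟨fun x => (x.2.2.2, x.1, x.2.2.1, x.2.1),
    fun y => (y.2.1, y.2.2.2, y.2.2.1, y.1), fun _ => rfl, fun _ => rfl⟩
    (fun a b c d => by dsimp; ring)

lemma Fmap_left_kron (δ : Matrix (Fin k × Fin m) (Fin k × Fin m) ℂ)
    (P : Matrix (Fin k) (Fin k) ℂ) (Q Y : Matrix (Fin m) (Fin m) ℂ) :
    Fmap ((P ⊗ₖ Q) * δ) Y = P * Fmap δ (Y * Q) := by
  ext i j
  simp only [Fmap, of_apply, Matrix.mul_apply, Fintype.sum_prod_type, kroneckerMap_apply,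
    Finset.sum_mul, Finset.mul_sum]
  exact sum4_eq _ _ ⟨fun x => (x.2.2.1, x.2.2.2, x.2.1, x.1),
    fun y => (y.2.2.2, y.2.2.1, y.1, y.2.1), fun _ => rfl, fun _ => rfl⟩
    (fun a b c d => by dsimp; ring)

lemma Fmap_right_kron (δ : Matrix (Fin k × Fin m) (Fin k × Fin m) ℂ)
    (R : Matrix (Fin k) (Fin k) ℂ) (S Y : Matrix (Fin m) (Fin m) ℂ) :
    Fmap (δ * (R ⊗ₖ S)) Y = Fmap δ (S * Y) * R := by
  ext i j
  simp only [Fmap, of_apply, Matrix.mul_apply, Fintype.sum_prod_type, kroneckerMap_apply,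
    Finset.sum_mul, Finset.mul_sum]
  exact sum4_eq _ _ ⟨fun x => (x.2.2.1, x.1, x.2.2.2, x.2.1),
    fun y => (y.2.1, y.2.2.2, y.1, y.2.2.1), fun _ => rfl, fun _ => rfl⟩
    (fun a b c d => by dsimp; ring)

lemma Gmap_zero (Z : Matrix (Fin k) (Fin k) ℂ) :
    Gmap (0 : Matrix (Fin k × Fin m) (Fin k × Fin m) ℂ) Z = 0 := by
  ext p q; simp [Gmap]

lemma Fmap_zero (Y : Matrix (Fin m) (Fin m) ℂ) :
    Fmap (0 : Matrix (Fin k × Fin m) (Fin k × Fin m) ℂ) Y = 0 := by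
  ext i j; simp [Fmap]

end KronLemmas

lemma trace_conjT_mul_self_zero {n : Type*} [Fintype n] [DecidableEq n]
    {M : Matrix n n ℂ} (h : (Mᴴ * M).trace = 0) : M = 0 := by
  have hd : ∀ p, (Mᴴ * M) p p = star (fun i => M i p) ⬝ᵥ (fun i => M i p) := by
    intro p; simp [Matrix.mul_apply, dotProduct, conjTranspose_apply]
  have hnn : ∀ p ∈ Finset.univ, (0:ℂ) ≤ (Mᴴ * M) p p := by
    intro p _
    rw [hd]
    exact Finset.sum_nonneg fun i _ => star_mul_self_nonneg _
  have hz : ∀ p ∈ Finset.univ, (Mᴴ * M) p p = 0 :=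
    (Finset.sum_eq_zero_iff_of_nonneg hnn).mp h
  ext i p
  have := (hz p (Finset.mem_univ p))
  rw [hd] at this
  have hcol := dotProduct_star_self_eq_zero.mp this
  simpa using congrFun hcol i

lemma psd_mul_eq_zero {n : Type*} [Fintype n] [DecidableEq n] {A B : Matrix n n ℂ}
    (hA : A.PosSemidef) (hB : B.PosSemidef) (h : (A * B).trace = 0) : A * B = 0 := by
  obtain ⟨C, rfl⟩ : ∃ C : Matrix n n ℂ, A = Cᴴ * C := by
    open scoped MatrixOrder in exact CStarAlgebra.nonneg_iff_eq_star_mul_self.mp hA.nonneg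
  obtain ⟨D, rfl⟩ : ∃ D : Matrix n n ℂ, B = Dᴴ * D := by
    open scoped MatrixOrder in exact CStarAlgebra.nonneg_iff_eq_star_mul_self.mp hB.nonneg
  have key : C * Dᴴ = 0 := by
    apply trace_conjT_mul_self_zero
    have e1 : (C * Dᴴ)ᴴ * (C * Dᴴ) = D * (Cᴴ * (C * Dᴴ)) := by
      rw [conjTranspose_mul, conjTranspose_conjTranspose]
      simp only [Matrix.mul_assoc]
    rw [e1, Matrix.trace_mul_comm,
      show Cᴴ * (C * Dᴴ) * D = Cᴴ * C * (Dᴴ * D) by simp only [Matrix.mul_assoc], h]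
  calc Cᴴ * C * (Dᴴ * D) = Cᴴ * (C * Dᴴ) * D := by simp only [Matrix.mul_assoc]
    _ = 0 := by rw [key, Matrix.mul_zero, Matrix.zero_mul]

lemma kron_conjT {n p : Type*} [Fintype n] [Fintype p]
    (A : Matrix n n ℂ) (B : Matrix p p ℂ) : (A ⊗ₖ B)ᴴ = Aᴴ ⊗ₖ Bᴴ := by
  ext ⟨i, r⟩ ⟨j, s⟩
  simp [conjTranspose_apply, kroneckerMap_apply, star_mul', mul_comm]

lemma kron_psd {n p : Type*} [Fintype n] [Fintype p] [DecidableEq n] [DecidableEq p]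
    {A : Matrix n n ℂ} {B : Matrix p p ℂ}
    (hA : A.IsHermitian) (hA2 : A * A = A) (hB : B.IsHermitian) (hB2 : B * B = B) :
    (A ⊗ₖ B).PosSemidef := by
  have := posSemidef_conjTranspose_mul_self (A ⊗ₖ B)
  rwa [kron_conjT, hA.eq, hB.eq, ← Matrix.mul_kronecker_mul, hA2, hB2] at this

/-- If there is an orthogonal projection `V` with
`tr(γ(W ⊗ V^⊥)) = tr(γ(W^⊥ ⊗ V)) = 0`, then `Im(F_γ(G_γ(W))) ⊆ Im(W)` and the subalgebra
`W M_k W` is left invariant by `F_γ ∘ G_γ`. -/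
theorem stmt7 (k m : ℕ) (γ : Matrix (Fin k × Fin m) (Fin k × Fin m) ℂ)
    (W : Matrix (Fin k) (Fin k) ℂ) (hγ : γ.PosSemidef)
    (hWherm : W.IsHermitian) (hWproj : W * W = W)
    (hV : ∃ V : Matrix (Fin m) (Fin m) ℂ, V.IsHermitian ∧ V * V = V ∧
      (γ * (W ⊗ₖ (1 - V))).trace = 0 ∧ (γ * ((1 - W) ⊗ₖ V)).trace = 0) :
    LinearMap.range (Fmap γ (Gmap γ W)).mulVecLin ≤ LinearMap.range W.mulVecLin ∧
    (∀ X : Matrix (Fin k) (Fin k) ℂ,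
      Fmap γ (Gmap γ (W * X * W)) = W * (Fmap γ (Gmap γ (W * X * W))) * W) := by
  obtain ⟨V, hVherm, hVproj, ht1, ht2⟩ := hV
  -- complements are hermitian projections
  have hW'herm : (1 - W).IsHermitian := (Matrix.isHermitian_one).sub hWherm
  have hV'herm : (1 - V).IsHermitian := (Matrix.isHermitian_one).sub hVherm
  have hW'proj : (1 - W) * (1 - W) = 1 - W := by
    rw [Matrix.mul_sub, Matrix.sub_mul, Matrix.sub_mul, hWproj]
    simp
  have hV'proj : (1 - V) * (1 - V) = 1 - V := by
    rw [Matrix.mul_sub, Matrix.sub_mul, Matrix.sub_mul, hVproj]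
    simp
  -- the two kronecker products are PSD
  have psd1 : (W ⊗ₖ (1 - V)).PosSemidef := kron_psd hWherm hWproj hV'herm hV'proj
  have psd2 : ((1 - W) ⊗ₖ V).PosSemidef := kron_psd hW'herm hW'proj hVherm hVproj
  -- zero products
  have hz1 : γ * (W ⊗ₖ (1 - V)) = 0 := psd_mul_eq_zero hγ psd1 ht1
  have hz3 : γ * ((1 - W) ⊗ₖ V) = 0 := psd_mul_eq_zero hγ psd2 ht2
  have hz2 : (W ⊗ₖ (1 - V)) * γ = 0 := by
    have := congrArg Matrix.conjTranspose hz1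
    rwa [conjTranspose_mul, kron_conjT, hWherm.eq, hV'herm.eq, hγ.1.eq,
      conjTranspose_zero] at this
  have hz4 : ((1 - W) ⊗ₖ V) * γ = 0 := by
    have := congrArg Matrix.conjTranspose hz3
    rwa [conjTranspose_mul, kron_conjT, hW'herm.eq, hVherm.eq, hγ.1.eq,
      conjTranspose_zero] at this
  -- key: G(WXW) is supported on V on both sides
  have key1 : ∀ X : Matrix (Fin k) (Fin k) ℂ, (1 - V) * Gmap γ (W * X * W) = 0 := by
    intro X
    have e : Gmap ((W ⊗ₖ (1 - V)) * (γ * (W ⊗ₖ (1 : Matrix (Fin m) (Fin m) ℂ)))) X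
        = (1 - V) * Gmap γ (W * X * W) := by
      rw [Gmap_left_kron, Gmap_right_kron, Matrix.mul_one, ← Matrix.mul_assoc]
    rw [← e, ← Matrix.mul_assoc, hz2, Matrix.zero_mul, Gmap_zero]
  have key2 : ∀ X : Matrix (Fin k) (Fin k) ℂ, Gmap γ (W * X * W) * (1 - V) = 0 := by
    intro X
    have e : Gmap ((W ⊗ₖ (1 : Matrix (Fin m) (Fin m) ℂ)) * (γ * (W ⊗ₖ (1 - V)))) X
        = Gmap γ (W * X * W) * (1 - V) := by
      rw [Gmap_left_kron, Gmap_right_kron, Matrix.one_mul, ← Matrix.mul_assoc]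
    rw [← e, hz1, Matrix.mul_zero, Gmap_zero]
  -- hence F(G(WXW)) is supported on W on both sides
  have main : ∀ X : Matrix (Fin k) (Fin k) ℂ,
      Fmap γ (Gmap γ (W * X * W)) = W * Fmap γ (Gmap γ (W * X * W)) ∧
      Fmap γ (Gmap γ (W * X * W)) = Fmap γ (Gmap γ (W * X * W)) * W := by
    intro X
    set Y := Gmap γ (W * X * W) with hY
    have hVY : V * Y = Y := by
      have := key1 X
      rw [Matrix.sub_mul, Matrix.one_mul, sub_eq_zero] at this
      exact this.symm
    have hYV : Y * V = Y := by
      have := key2 X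
      rw [Matrix.mul_sub, Matrix.mul_one, sub_eq_zero] at this
      exact this.symm
    have key3 : (1 - W) * Fmap γ Y = 0 := by
      have e : Fmap (((1 - W) ⊗ₖ V) * γ) Y = (1 - W) * Fmap γ Y := by
        rw [Fmap_left_kron, hYV]
      rw [← e, hz4, Fmap_zero]
    have key4 : Fmap γ Y * (1 - W) = 0 := by
      have e : Fmap (γ * ((1 - W) ⊗ₖ V)) Y = Fmap γ Y * (1 - W) := by
        rw [Fmap_right_kron, hVY]
      rw [← e, hz3, Fmap_zero]
    constructor
    · rw [Matrix.sub_mul, Matrix.one_mul, sub_eq_zero] at key3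
      exact key3
    · rw [Matrix.mul_sub, Matrix.mul_one, sub_eq_zero] at key4
      exact key4
  constructor
  · have hW1 : W * 1 * W = W := by rw [Matrix.mul_one, hWproj]
    have h1 := (main 1).1
    rw [hW1] at h1
    rw [h1, Matrix.mulVecLin_mul]
    exact LinearMap.range_comp_le_range _ _
  · intro X
    conv_lhs => rw [(main X).1, (main X).2]
    rw [← Matrix.mul_assoc]
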